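/- Let k be a field, Γ a linearly ordered abelian group, and K = k((t^Γ)) the Hahn series field (HahnSeries Γ k). Then for every x ∈ K, x lies in the image of the constant embedding C : k → K if and only if for all y ∈ K, res(x·y) = res(x)·res(y), where res(z) denotes the coefficient of z at 0. In other words, the subfield k ⊆ k((t^Γ)) is exactly {x : ∀ y, res(xy) = res(x)·res(y)}. -/

import Mathlib

/-- in the Hahn series field k((t^Γ)), an element x lies in the image of the
    constant embedding C : k → k((t^Γ)) iff res(x·y) = res(x)·res(y) for all y, where
    res(z) = z.coeff 0. -/
theorem stmt_7 {k : Type*} [Field k] {Γ : Type*} [AddCommGroup Γ] [LinearOrder Γ] [IsOrderedAddMonoid Γ]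
    (x : HahnSeries Γ k) :
    (∃ c : k, HahnSeries.C c = x) ↔
      ∀ y : HahnSeries Γ k, (x * y).coeff 0 = x.coeff 0 * y.coeff 0 := by
  constructor
  · rintro ⟨c, rfl⟩ y
    have h := HahnSeries.coeff_single_mul_add (r := c) (x := y) (a := (0 : Γ)) (b := (0 : Γ))
    simp only [zero_add] at h
    simp only [HahnSeries.C_apply, HahnSeries.coeff_single_same]; exact h
  · intro h
    refine ⟨x.coeff 0, ?_⟩
    ext a
    rcases eq_or_ne a 0 with rfl | ha
    · simp [HahnSeries.C_apply, HahnSeries.coeff_single_same]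
    · have h2 := h (HahnSeries.single (-a) 1)
      have h3 := HahnSeries.coeff_mul_single_add (r := (1 : k)) (x := x) (a := a) (b := -a)
      rw [add_neg_cancel] at h3
      rw [h3, mul_one] at h2
      have : (HahnSeries.single (-a) (1 : k)).coeff 0 = 0 := by
        rw [HahnSeries.coeff_single_of_ne]
        simpa using ha
      rw [this, mul_zero] at h2
      simp [HahnSeries.C_apply, HahnSeries.coeff_single_of_ne ha, h2]
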